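/- With the setup of the consistent Bayesian posterior, let $P^{post}$ be the measure on $\Lambda$ with density $\pi^{post}(\lambda) = \pi^{prior}(\lambda) \, \pi^{obs}(Q(\lambda)) / \pi^{Q(prior)}(Q(\lambda))$ with respect to $\mu_\Lambda$. Then the push-forward of $P^{post}$ under $Q$ equals the observed measure: for every $A \in \mathcal{B}_\mathcal{D}$, $P^{post}(Q^{-1}(A)) = \int_A \pi^{obs}(q)\, d\mu_\mathcal{D}(q)$. That is, the posterior is consistent with the observed distribution. -/

import Mathlib

open MeasureTheory ENNReal

/-- Consistency of the consistent Bayesian posterior: the push-forward under `Q` of the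
measure with density `πprior * (πobs ∘ Q) / (πQ ∘ Q)` equals the observed measure. -/
theorem consistent_posterior_pushforward
    {Λ D : Type*} [MeasurableSpace Λ] [MeasurableSpace D]
    (μΛ : Measure Λ) (μD : Measure D)
    (Q : Λ → D) (hQ : Measurable Q)
    (πprior : Λ → ℝ≥0∞) (hπprior : Measurable πprior)
    (hprior1 : ∫⁻ l, πprior l ∂μΛ = 1)
    (πQ : D → ℝ≥0∞) (hπQ : Measurable πQ)
    (hpush : Measure.map Q (μΛ.withDensity πprior) = μD.withDensity πQ)
    (πobs : D → ℝ≥0∞) (hπobs : Measurable πobs)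
    (hobs1 : ∫⁻ q, πobs q ∂μD = 1)
    (habs : ∀ q, πQ q = 0 → πobs q = 0) :
    ∀ A : Set D, MeasurableSet A →
      (μΛ.withDensity (fun l => πprior l * (πobs (Q l) / πQ (Q l)))) (Q ⁻¹' A)
        = ∫⁻ q in A, πobs q ∂μD := by
  intro A hA
  set g : D → ℝ≥0∞ := fun q => πobs q / πQ q with hg
  have hgm : Measurable g := hπobs.div hπQ
  -- split the density
  have hsplit : μΛ.withDensity (fun l => πprior l * (πobs (Q l) / πQ (Q l)))
      = (μΛ.withDensity πprior).withDensity (g ∘ Q) := by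
    rw [← withDensity_mul _ hπprior (hgm.comp hQ)]
    rfl
  rw [hsplit]
  rw [withDensity_apply _ (hA.preimage hQ)]
  have hmap : ∫⁻ l in Q ⁻¹' A, (g ∘ Q) l ∂(μΛ.withDensity πprior)
      = ∫⁻ q in A, g q ∂(Measure.map Q (μΛ.withDensity πprior)) := by
    rw [setLIntegral_map hA hgm hQ]; rfl
  rw [hmap, hpush, restrict_withDensity hA,
    lintegral_withDensity_eq_lintegral_mul _ hπQ hgm]
  -- now reduce πQ * (πobs / πQ) to πobs a.e.
  have hπQ1 : ∫⁻ q, πQ q ∂μD = 1 := by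
    have := congrArg (fun μ : Measure D => μ Set.univ) hpush
    simp only [Measure.map_apply hQ MeasurableSet.univ, Set.preimage_univ,
      withDensity_apply _ MeasurableSet.univ, Measure.restrict_univ] at this
    rw [← this, hprior1]
  have hfin : ∀ᵐ q ∂μD, πQ q < ∞ :=
    ae_lt_top hπQ (by rw [hπQ1]; exact one_ne_top)
  have hae : ∀ᵐ q ∂μD, (πQ * g) q = πobs q := by
    filter_upwards [hfin] with q hq
    simp only [Pi.mul_apply, hg]
    rcases eq_or_ne (πQ q) 0 with h0 | h0
    · simp [h0, habs q h0]
    · exact ENNReal.mul_div_cancel h0 hq.ne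
  exact lintegral_congr_ae (ae_restrict_of_ae hae)
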